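/- arXiv:0712.2996 — 4 statements merged into one kernel-verified Lean document; each statement's English description precedes it below -/
import Mathlib

section
/- Let [p_n/q_n, r_n/s_n] for n ∈ ℕ be a nested sequence of closed intervals, each determined by a unimodular pair of reduced fractions, with each interval strictly contained in the previous one. Then the lengths r_n/s_n - p_n/q_n tend to 0 as n → ∞. -/
theorem nested_unimodular_intervals_length_tendsto_zero
    (p q r s : ℕ → ℤ)
    (hq : ∀ n, 0 < q n) (hs : ∀ n, 0 < s n)
    (hpq : ∀ n, IsCoprime (p n) (q n)) (hrs : ∀ n, IsCoprime (r n) (s n))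
    (hlt : ∀ n, (p n : ℝ) / q n < (r n : ℝ) / s n)
    (huni : ∀ n, q n * r n - p n * s n = 1)
    (hnest : ∀ n, Set.Icc ((p (n+1) : ℝ) / q (n+1)) ((r (n+1) : ℝ) / s (n+1)) ⊂
      Set.Icc ((p n : ℝ) / q n) ((r n : ℝ) / s n)) :
    Filter.Tendsto (fun n => (r n : ℝ) / s n - (p n : ℝ) / q n)
      Filter.atTop (nhds 0) := by
  have hq' : ∀ n, (q n : ℝ) > 0 := fun n => by exact_mod_cast hq n
  have hs' : ∀ n, (s n : ℝ) > 0 := fun n => by exact_mod_cast hs n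
  -- length formula
  have hlen : ∀ n, (r n : ℝ) / s n - (p n : ℝ) / q n = 1 / (q n * s n) := by
    intro n
    have h : (q n : ℝ) * r n - p n * s n = 1 := by exact_mod_cast huni n
    have h1 : (s n : ℝ) ≠ 0 := ne_of_gt (hs' n)
    have h2 : (q n : ℝ) ≠ 0 := ne_of_gt (hq' n)
    field_simp
    linear_combination h
  -- strict growth of q n * s n
  have hmono : ∀ n, q n * s n + 1 ≤ q (n+1) * s (n+1) := by
    intro n
    obtain ⟨hsub, hne⟩ := hnest n
    have hne' : (p (n+1) : ℝ) / q (n+1) ≤ (r (n+1) : ℝ) / s (n+1) := (hlt (n+1)).le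
    rw [Set.Icc_subset_Icc_iff hne'] at hsub
    have hstrict : (r (n+1) : ℝ) / s (n+1) - (p (n+1) : ℝ) / q (n+1)
        < (r n : ℝ) / s n - (p n : ℝ) / q n := by
      rcases lt_or_eq_of_le hsub.1 with h1 | h1
      · linarith [hsub.2]
      rcases lt_or_eq_of_le hsub.2 with h2 | h2
      · linarith
      · exact absurd (by rw [h1, h2]) hne
    rw [hlen, hlen] at hstrict
    have hpos1 : (0:ℝ) < (q n : ℝ) * s n := mul_pos (hq' n) (hs' n)
    have hpos2 : (0:ℝ) < (q (n+1) : ℝ) * s (n+1) := mul_pos (hq' (n+1)) (hs' (n+1))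
    have : (q n : ℝ) * s n < (q (n+1) : ℝ) * s (n+1) :=
      lt_of_one_div_lt_one_div hpos2 hstrict
    have : q n * s n < q (n+1) * s (n+1) := by exact_mod_cast this
    omega
  have hgrow : ∀ n : ℕ, (n : ℤ) + 1 ≤ q n * s n := by
    intro n
    induction n with
    | zero => simpa using Int.add_one_le_of_lt (mul_pos (hq 0) (hs 0))
    | succ k ih =>
      have := hmono k
      push_cast
      omega
  -- squeeze
  have h0 : Filter.Tendsto (fun n : ℕ => 1 / ((n : ℝ) + 1)) Filter.atTop (nhds 0) :=
    tendsto_one_div_add_atTop_nhds_zero_nat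
  refine squeeze_zero (fun n => ?_) (fun n => ?_) h0
  · rw [hlen]
    have := hq' n
    have := hs' n
    positivity
  · rw [hlen]
    have hgn : ((n : ℝ) + 1) ≤ (q n * s n : ℤ) := by exact_mod_cast hgrow n
    apply one_div_le_one_div_of_le (by positivity)
    push_cast at hgn ⊢
    exact hgn
end

section
/- Let x be a real quadratic irrational. Then there exists a 2×2 matrix H with integer entries such that (x, 1) is an eigenvector of H with eigenvalue λ, the other eigenvalue λ̄ satisfies 0 < λ̄ < λ. -/
lemma aux_eigen (x : ℝ) (c d e d0 : ℤ)
    (heq : (c : ℝ) * x ^ 2 + d * x + e = 0)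
    (h1 : 0 < 2 * (c : ℝ) * x + d) (h2 : (c : ℝ) * x + d < d0) :
    ∃ (H : Matrix (Fin 2) (Fin 2) ℤ) (lam lamBar : ℝ),
      (H.map (Int.cast : ℤ → ℝ)).mulVec ![x, 1] = lam • ![x, 1] ∧
      0 < lamBar ∧ lamBar < lam ∧
      (H.map (Int.cast : ℤ → ℝ)).trace = lam + lamBar ∧
      (H.map (Int.cast : ℤ → ℝ)).det = lam * lamBar := by
  refine ⟨!![d0 - d, -e; c, d0], (c : ℝ) * x + d0, (d0 : ℝ) - d - c * x, ?_, ?_, ?_, ?_, ?_⟩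
  · funext i
    fin_cases i <;>
      simp [Matrix.mulVec, dotProduct, Fin.sum_univ_two] <;>
      push_cast <;> nlinarith [heq]
  · linarith
  · linarith
  · simp [Matrix.trace_fin_two]
    push_cast
    ring
  · simp [Matrix.det_fin_two]
    push_cast
    linear_combination (c : ℝ) * heq

theorem quadratic_irrational_eigenvector_matrix (x : ℝ) (hx : Irrational x)
    (hquad : ∃ c d e : ℤ, c ≠ 0 ∧ (c : ℝ) * x ^ 2 + d * x + e = 0) :
    ∃ (H : Matrix (Fin 2) (Fin 2) ℤ) (lam lamBar : ℝ),
      (H.map (Int.cast : ℤ → ℝ)).mulVec ![x, 1] = lam • ![x, 1] ∧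
      0 < lamBar ∧ lamBar < lam ∧
      (H.map (Int.cast : ℤ → ℝ)).trace = lam + lamBar ∧
      (H.map (Int.cast : ℤ → ℝ)).det = lam * lamBar := by
  obtain ⟨c, d, e, hc, heq⟩ := hquad
  rcases lt_trichotomy (2 * (c : ℝ) * x + d) 0 with h | h | h
  · obtain ⟨d0, hd0⟩ := exists_int_gt ((-c : ℝ) * x + (-d : ℤ))
    refine aux_eigen x (-c) (-d) (-e) d0 ?_ ?_ ?_
    · push_cast; nlinarith [heq]
    · push_cast; linarith
    · push_cast; push_cast at hd0; linarith
  · exfalso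
    apply hx
    refine ⟨(-d : ℚ) / (2 * c), ?_⟩
    have hc2 : (2 * (c : ℝ)) ≠ 0 := by
      simp [hc]
    push_cast
    rw [div_eq_iff hc2]
    linarith
  · obtain ⟨d0, hd0⟩ := exists_int_gt ((c : ℝ) * x + (d : ℤ))
    exact aux_eigen x c d e d0 heq h (by push_cast; linarith)
end

section
/- Let H be a 2×2 real matrix with eigenvalues λ > λ̄ > 0, with corresponding eigenvectors v (for λ) and w (for λ̄). Let C be a closed convex cone in ℝ² spanned positively by two linearly independent vectors, such that v ∈ C and w ∉ C ∪ (−C). Then H maps C into C. -/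
theorem cone_mapsto_self (H : Matrix (Fin 2) (Fin 2) ℝ)
    (lam lamBar : ℝ) (v w u₁ u₂ : Fin 2 → ℝ)
    (hlam : 0 < lamBar) (hlt : lamBar < lam)
    (hv : v ≠ 0) (hHv : H.mulVec v = lam • v)
    (hHw : H.mulVec w = lamBar • w)
    (hu : LinearIndependent ℝ ![u₁, u₂])
    (C : Set (Fin 2 → ℝ))
    (hC : C = {z | ∃ a b : ℝ, 0 ≤ a ∧ 0 ≤ b ∧ z = a • u₁ + b • u₂})
    (hvC : v ∈ C) (hwC : w ∉ C ∪ (-C)) :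
    ∀ z ∈ C, H.mulVec z ∈ C := by
  -- express w in the u₁, u₂ basis
  obtain ⟨c, d, hw'⟩ : ∃ c d : ℝ, w = c • u₁ + d • u₂ := by
    have hcard : Fintype.card (Fin 2) = Module.finrank ℝ (Fin 2 → ℝ) := by simp
    let B := basisOfLinearIndependentOfCardEqFinrank hu hcard
    have hB0 : B 0 = u₁ := by
      simp [B, coe_basisOfLinearIndependentOfCardEqFinrank]
    have hB1 : B 1 = u₂ := by
      simp [B, coe_basisOfLinearIndependentOfCardEqFinrank]
    refine ⟨B.repr w 0, B.repr w 1, ?_⟩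
    have h := B.sum_repr w
    rw [Fin.sum_univ_two, hB0, hB1] at h
    exact h.symm
  obtain ⟨a, b, ha, hb, hv'⟩ : ∃ a b : ℝ, 0 ≤ a ∧ 0 ≤ b ∧ v = a • u₁ + b • u₂ := by
    rw [hC] at hvC; exact hvC
  have hwC1 : w ∉ C := fun h => hwC (Or.inl h)
  have hwC2 : w ∉ -C := fun h => hwC (Or.inr h)
  have hcd : c * d < 0 := by
    have h1 : ¬ (0 ≤ c ∧ 0 ≤ d) := by
      rintro ⟨hc, hd⟩
      exact hwC1 (by rw [hC]; exact ⟨c, d, hc, hd, hw'⟩)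
    have h2 : ¬ (c ≤ 0 ∧ d ≤ 0) := by
      rintro ⟨hc, hd⟩
      apply hwC2
      rw [Set.mem_neg, hC]
      refine ⟨-c, -d, by linarith, by linarith, ?_⟩
      rw [hw']; funext i; simp; ring
    push_neg at h1 h2
    rcases lt_or_ge c 0 with hc | hc
    · have hd : 0 < d := h2 (le_of_lt hc)
      nlinarith
    · have hc0 : c ≠ 0 := by
        intro h
        have hd := h1 hc
        have := h2 (le_of_eq h)
        linarith
      have hc' : 0 < c := lt_of_le_of_ne hc (Ne.symm hc0)
      have hd : d < 0 := h1 hc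
      nlinarith
  have hab : 0 < a ∨ 0 < b := by
    by_contra h
    push_neg at h
    have ha0 : a = 0 := le_antisymm h.1 ha
    have hb0 : b = 0 := le_antisymm h.2 hb
    apply hv
    rw [hv', ha0, hb0]
    funext i; simp
  have hdΔ : 0 < d * (a * d - b * c) := by
    rcases lt_or_ge c 0 with hc | hc
    · have hd : 0 < d := by nlinarith
      have hnc : (0:ℝ) ≤ -c := by linarith
      rcases hab with h | h
      · nlinarith [mul_pos (mul_pos h hd) hd,
          mul_nonneg (mul_nonneg hb hnc) hd.le]
      · nlinarith [mul_pos (mul_pos h (by linarith : (0:ℝ) < -c)) hd,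
          mul_nonneg (mul_nonneg ha hd.le) hd.le]
    · have hc0 : c ≠ 0 := by intro h; rw [h] at hcd; simp at hcd
      have hc' : 0 < c := lt_of_le_of_ne hc (Ne.symm hc0)
      have hd : d < 0 := by nlinarith
      have hnd : (0:ℝ) < -d := by linarith
      rcases hab with h | h
      · nlinarith [mul_pos (mul_pos h hnd) hnd,
          mul_nonneg (mul_nonneg hb hc'.le) hnd.le]
      · nlinarith [mul_pos (mul_pos h hc') hnd,
          mul_nonneg ha (mul_self_nonneg d)]
  have hcΔ : 0 < (-c) * (a * d - b * c) := by
    rcases lt_or_ge c 0 with hc | hc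
    · have hd : 0 < d := by nlinarith
      have hnc : (0:ℝ) < -c := by linarith
      rcases hab with h | h
      · nlinarith [mul_pos (mul_pos h hnc) hd,
          mul_nonneg (mul_nonneg hb hnc.le) hnc.le]
      · nlinarith [mul_pos (mul_pos h hnc) hnc,
          mul_nonneg (mul_nonneg ha hnc.le) hd.le]
    · have hc0 : c ≠ 0 := by intro h; rw [h] at hcd; simp at hcd
      have hc' : 0 < c := lt_of_le_of_ne hc (Ne.symm hc0)
      have hd : d < 0 := by nlinarith
      have hnd : (0:ℝ) < -d := by linarith
      rcases hab with h | h
      · nlinarith [mul_pos (mul_pos h hc') hnd,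
          mul_nonneg (mul_nonneg hb hc'.le) hc'.le]
      · nlinarith [mul_pos (mul_pos h hc') hc',
          mul_nonneg (mul_nonneg ha hc'.le) hnd.le]
  have hΔ0 : a * d - b * c ≠ 0 := by
    intro h; rw [h] at hdΔ; simp at hdΔ
  -- main argument
  intro z hz
  rw [hC] at hz ⊢
  obtain ⟨p, q, hp, hq, hz'⟩ := hz
  have hs : 0 ≤ (p * d - q * c) / (a * d - b * c) := by
    have heq : (p * d - q * c) / (a * d - b * c)
        = (p * (d * (a * d - b * c)) + q * ((-c) * (a * d - b * c)))
          / ((a * d - b * c) * (a * d - b * c)) := by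
      field_simp; ring
    rw [heq]
    apply div_nonneg
    · have h1 := mul_nonneg hp hdΔ.le
      have h2 := mul_nonneg hq hcΔ.le
      linarith
    · exact mul_self_nonneg _
  have hz2 : z = ((p * d - q * c) / (a * d - b * c)) • v
      + ((q * a - p * b) / (a * d - b * c)) • w := by
    rw [hz', hv', hw']
    funext i
    simp only [Pi.add_apply, Pi.smul_apply, smul_eq_mul]
    have hinv : (a * d - b * c) * (a * d - b * c)⁻¹ = 1 := mul_inv_cancel₀ hΔ0
    linear_combination (-(p * u₁ i + q * u₂ i)) * hinv
  have hkey : H.mulVec z = (lam * ((p * d - q * c) / (a * d - b * c))) • v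
      + (lamBar * ((q * a - p * b) / (a * d - b * c))) • w := by
    rw [hz2, Matrix.mulVec_add, Matrix.mulVec_smul, Matrix.mulVec_smul, hHv, hHw]
    funext i
    simp only [Pi.add_apply, Pi.smul_apply, smul_eq_mul]
    ring
  refine ⟨lamBar * p + (lam - lamBar) * ((p * d - q * c) / (a * d - b * c)) * a,
          lamBar * q + (lam - lamBar) * ((p * d - q * c) / (a * d - b * c)) * b,
          ?_, ?_, ?_⟩
  · have h1 : 0 ≤ lamBar * p := mul_nonneg hlam.le hp
    have h2 : 0 ≤ (lam - lamBar) * ((p * d - q * c) / (a * d - b * c)) * a :=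
      mul_nonneg (mul_nonneg (by linarith) hs) ha
    linarith
  · have h1 : 0 ≤ lamBar * q := mul_nonneg hlam.le hq
    have h2 : 0 ≤ (lam - lamBar) * ((p * d - q * c) / (a * d - b * c)) * b :=
      mul_nonneg (mul_nonneg (by linarith) hs) hb
    linarith
  · rw [hkey, hv', hw']
    funext i
    simp only [Pi.add_apply, Pi.smul_apply, smul_eq_mul]
    have hinv : (a * d - b * c) * (a * d - b * c)⁻¹ = 1 := mul_inv_cancel₀ hΔ0
    linear_combination (lamBar * (p * u₁ i + q * u₂ i)) * hinv
end

section
/- For the ordinary Gauss map, an irrational x ∈ (0,1) has an eventually periodic sequence of partial quotients (a_n) if and only if x is a quadratic irrational. -/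
open Set

namespace LagrangeAux

noncomputable def G : ℝ → ℝ := fun y => Int.fract y⁻¹

lemma step {y : ℝ} (h1 : Irrational y) (h2 : y ∈ Set.Ioo (0:ℝ) 1) :
    Irrational (G y) ∧ G y ∈ Set.Ioo (0:ℝ) 1 ∧ 1 ≤ ⌊y⁻¹⌋ ∧ y * ((⌊y⁻¹⌋ : ℝ) + G y) = 1 := by
  obtain ⟨hy0, hy1⟩ := h2
  have hinv : 1 < y⁻¹ := (one_lt_inv₀ hy0).mpr hy1
  have hii : Irrational y⁻¹ := h1.inv
  have hfl : 1 ≤ ⌊y⁻¹⌋ := by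
    have : (1:ℤ) ≤ ⌊y⁻¹⌋ := Int.le_floor.mpr (by exact_mod_cast hinv.le)
    exact this
  have hGdef : G y = y⁻¹ - ⌊y⁻¹⌋ := rfl
  have hGirr : Irrational (G y) := by rw [hGdef]; exact hii.sub_intCast _
  have hG0 : 0 < G y := Int.fract_pos.mpr (fun hf => (hii.ne_int ⌊y⁻¹⌋) hf)
  have hG1 : G y < 1 := Int.fract_lt_one _
  refine ⟨hGirr, ⟨hG0, hG1⟩, hfl, ?_⟩
  rw [hGdef]
  have : (⌊y⁻¹⌋ : ℝ) + (y⁻¹ - ⌊y⁻¹⌋) = y⁻¹ := by ring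
  rw [this, mul_inv_cancel₀ (ne_of_gt hy0)]

lemma iter_props {y : ℝ} (h1 : Irrational y) (h2 : y ∈ Set.Ioo (0:ℝ) 1) (n : ℕ) :
    Irrational (G^[n] y) ∧ G^[n] y ∈ Set.Ioo (0:ℝ) 1 := by
  induction n with
  | zero => exact ⟨h1, h2⟩
  | succ n ih =>
    rw [Function.iterate_succ_apply']
    exact ⟨(step ih.1 ih.2).1, (step ih.1 ih.2).2.1⟩


/-- (P, Q, R, S): matrix [[P,R],[Q,S]], product of [[0,1],[1,a k]]. -/
def M (a : ℕ → ℤ) : ℕ → ℤ × ℤ × ℤ × ℤ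
  | 0 => (1, 0, 0, 1)
  | n+1 =>
    ((M a n).2.2.1, (M a n).2.2.2,
      (M a n).1 + (M a n).2.2.1 * a n, (M a n).2.1 + (M a n).2.2.2 * a n)

def P (a : ℕ → ℤ) (n : ℕ) : ℤ := (M a n).1
def Q (a : ℕ → ℤ) (n : ℕ) : ℤ := (M a n).2.1
def R (a : ℕ → ℤ) (n : ℕ) : ℤ := (M a n).2.2.1
def S (a : ℕ → ℤ) (n : ℕ) : ℤ := (M a n).2.2.2

@[simp] lemma P0 (a : ℕ → ℤ) : P a 0 = 1 := rfl
@[simp] lemma Q0 (a : ℕ → ℤ) : Q a 0 = 0 := rfl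
@[simp] lemma R0 (a : ℕ → ℤ) : R a 0 = 0 := rfl
@[simp] lemma S0 (a : ℕ → ℤ) : S a 0 = 1 := rfl
lemma Psucc (a : ℕ → ℤ) (n : ℕ) : P a (n+1) = R a n := rfl
lemma Qsucc (a : ℕ → ℤ) (n : ℕ) : Q a (n+1) = S a n := rfl
lemma Rsucc (a : ℕ → ℤ) (n : ℕ) : R a (n+1) = P a n + R a n * a n := rfl
lemma Ssucc (a : ℕ → ℤ) (n : ℕ) : S a (n+1) = Q a n + S a n * a n := rfl

lemma pos (a : ℕ → ℤ) (ha : ∀ n, 1 ≤ a n) (n : ℕ) :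
    0 ≤ P a n ∧ 0 ≤ Q a n ∧ 0 ≤ R a n ∧ 1 ≤ S a n ∧ Q a n ≤ S a n ∧ 1 ≤ P a n + R a n := by
  induction n with
  | zero => simp
  | succ n ih =>
    obtain ⟨hP, hQ, hR, hS, hQS, hPR⟩ := ih
    have ha' := ha n
    rw [Psucc, Qsucc, Rsucc, Ssucc]
    refine ⟨hR, by linarith, ?_, ?_, ?_, ?_⟩
    · nlinarith
    · nlinarith
    · nlinarith
    · nlinarith

lemma Q_ge_one (a : ℕ → ℤ) (ha : ∀ n, 1 ≤ a n) (n : ℕ) (hn : 1 ≤ n) : 1 ≤ Q a n := by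
  obtain ⟨m, rfl⟩ := Nat.exists_eq_add_of_le hn
  rw [add_comm, Qsucc]
  exact (pos a ha m).2.2.2.1

lemma R_ge_one (a : ℕ → ℤ) (ha : ∀ n, 1 ≤ a n) (n : ℕ) (hn : 1 ≤ n) : 1 ≤ R a n := by
  obtain ⟨m, rfl⟩ := Nat.exists_eq_add_of_le hn
  rw [add_comm, Rsucc]
  obtain ⟨hP, hQ, hR, hS, hQS, hPR⟩ := pos a ha m
  nlinarith [ha m]

lemma det (a : ℕ → ℤ) (n : ℕ) : P a n * S a n - Q a n * R a n = (-1)^n := by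
  induction n with
  | zero => simp
  | succ n ih =>
    rw [Psucc, Qsucc, Rsucc, Ssucc, pow_succ]
    linear_combination (-1 : ℤ) * ih

lemma det_sq (a : ℕ → ℤ) (n : ℕ) : (P a n * S a n - Q a n * R a n)^2 = 1 := by
  rw [det]; rw [← pow_mul, mul_comm, pow_mul]; norm_num

/-- main invariant: x = (P wₙ + R)/(Q wₙ + S) where wₙ = G^[n] x and a is the
quotient sequence of x. -/
lemma invariant {x : ℝ} (h1 : Irrational x) (h2 : x ∈ Set.Ioo (0:ℝ) 1) (n : ℕ) :
    ((Q (fun k => ⌊(G^[k] x)⁻¹⌋) n : ℝ) * G^[n] x + S (fun k => ⌊(G^[k] x)⁻¹⌋) n) * x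
      = (P (fun k => ⌊(G^[k] x)⁻¹⌋) n : ℝ) * G^[n] x + R (fun k => ⌊(G^[k] x)⁻¹⌋) n := by
  set a : ℕ → ℤ := fun k => ⌊(G^[k] x)⁻¹⌋ with ha
  induction n with
  | zero => simp
  | succ n ih =>
    have hw := iter_props h1 h2 n
    have hstep := step hw.1 hw.2
    have hkey : G^[n] x * ((a n : ℝ) + G^[n+1] x) = 1 := by
      rw [Function.iterate_succ_apply']; exact hstep.2.2.2
    rw [Psucc, Qsucc, Rsucc, Ssucc]
    push_cast
    push_cast at ih
    set w := G^[n] x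
    set w' := G^[n+1] x
    linear_combination ((a n : ℝ) + w') * ih + ((P a n : ℝ) - (Q a n : ℝ) * x) * hkey

lemma degen (a b c d α β γ : ℤ) (hdet : (a*d - b*c)^2 = 1)
    (h1 : γ*a^2 + α*(a*c) + β*c^2 = 0)
    (h2 : γ*b^2 + α*(b*d) + β*d^2 = 0)
    (h3 : 2*γ*(a*b) + α*(a*d + b*c) + 2*β*(c*d) = 0) : β = 0 := by
  linear_combination b^2*h1 + a^2*h2 - a*b*h3 - β*hdet

lemma not_lin {x : ℝ} (hirr : Irrational x) (p q : ℤ) (hq : q ≠ 0) (h : (q:ℝ)*x = p) : False := by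
  apply hirr
  refine ⟨(p : ℚ)/(q : ℚ), ?_⟩
  have hq' : (q:ℝ) ≠ 0 := Int.cast_ne_zero.mpr hq
  push_cast
  field_simp
  linarith

lemma lead {x : ℝ} (hirr : Irrational x) (c d e : ℤ)
    (h : (c:ℝ)*x^2 + d*x + e = 0)
    (hne : ¬(c = 0 ∧ d = 0 ∧ e = 0)) : c ≠ 0 := by
  intro hc0
  subst hc0
  push_cast at h
  simp only [zero_mul, zero_add] at h
  by_cases hd : d = 0
  · subst hd
    simp at h
    exact hne ⟨rfl, rfl, by exact_mod_cast h⟩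
  · exact not_lin hirr (-e) d hd (by push_cast; linarith)

lemma contract : ∀ (j : ℕ) (y z : ℝ), Irrational y → y ∈ Set.Ioo (0:ℝ) 1 →
    Irrational z → z ∈ Set.Ioo (0:ℝ) 1 →
    (∀ k, ⌊(G^[k] y)⁻¹⌋ = ⌊(G^[k] z)⁻¹⌋) → |y - z| ≤ (1/2)^j := by
  intro j
  induction j with
  | zero =>
    intro y z _ hy _ hz _
    rw [pow_zero, abs_le]
    exact ⟨by linarith [hy.1, hy.2, hz.1, hz.2], by linarith [hy.1, hy.2, hz.1, hz.2]⟩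
  | succ j ih =>
    intro y z hyi hy hzi hz h
    have h0 : ⌊y⁻¹⌋ = ⌊z⁻¹⌋ := by have := h 0; simpa using this
    have hsy := step hyi hy
    have hsz := step hzi hz
    have h1' : ⌊(G y)⁻¹⌋ = ⌊(G z)⁻¹⌋ := by have := h 1; simpa using this
    have hsy1 := step hsy.1 hsy.2.1
    have hsz1 := step hsz.1 hsz.2.1
    have hy0 := hsy.2.2.2
    have hz0 := hsz.2.2.2
    rw [← h0] at hz0
    have hy1 := hsy1.2.2.2
    have hz1 := hsz1.2.2.2
    rw [← h1'] at hz1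
    have hid1 : y - z = y * z * (G z - G y) := by linear_combination z * hy0 - y * hz0
    have hid2 : G y - G z = G y * G z * (G (G z) - G (G y)) := by
      linear_combination (G z) * hy1 - (G y) * hz1
    have hid3 : y - z = (y * G y * (z * G z)) * (G (G y) - G (G z)) := by
      linear_combination hid1 - y * z * hid2
    have hay : (1:ℝ) ≤ (⌊y⁻¹⌋ : ℝ) := by exact_mod_cast hsy.2.2.1
    have hGy := hsy.2.1
    have hGz := hsz.2.1
    have hp : y * G y ≤ 1/2 := by
      nlinarith [hy0, mul_nonneg hy.1.le (sub_nonneg.mpr hay),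
        mul_nonneg hy.1.le (sub_nonneg.mpr hGy.2.le)]
    have hq : z * G z ≤ 1 := by nlinarith [hz.1, hz.2, hGz.1, hGz.2]
    have hppos : (0:ℝ) < y * G y := mul_pos hy.1 hGy.1
    have hqpos : (0:ℝ) < z * G z := mul_pos hz.1 hGz.1
    have hA : (y * G y) * (z * G z) ≤ 1/2 := by nlinarith [hp, hq, hppos, hqpos]
    have hApos : (0:ℝ) < (y * G y) * (z * G z) := by
      have := hy.1; have := hGy.1; have := hz.1; have := hGz.1
      positivity
    have hrec : ∀ k, ⌊(G^[k] (G (G y)))⁻¹⌋ = ⌊(G^[k] (G (G z)))⁻¹⌋ := by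
      intro k
      have e2 : ∀ w : ℝ, G^[k] (G (G w)) = G^[k+2] w := by
        intro w
        rw [Function.iterate_add_apply]
        congr 1
      rw [e2, e2]
      exact h (k+2)
    have hIH := ih (G (G y)) (G (G z)) hsy1.1 hsy1.2.1 hsz1.1 hsz1.2.1 hrec
    rw [hid3, abs_mul, abs_of_pos hApos]
    calc y * G y * (z * G z) * |G (G y) - G (G z)|
        ≤ (1/2) * (1/2)^j :=
          mul_le_mul hA hIH (abs_nonneg _) (by norm_num)
      _ = (1/2)^(j+1) := by ring
lemma quad_of_periodic {x : ℝ} (hirr : Irrational x) (hx : x ∈ Set.Ioo (0:ℝ) 1)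
    (t r : ℕ) (hr : 1 ≤ r)
    (hper : ∀ n ≥ t, ⌊(G^[n + r] x)⁻¹⌋ = ⌊(G^[n] x)⁻¹⌋) :
    ∃ c d e : ℤ, c ≠ 0 ∧ (c : ℝ) * x ^ 2 + d * x + e = 0 := by
  set y := G^[t] x with hydef
  have hy := iter_props hirr hx t
  have hz := iter_props hirr hx (t + r)
  -- y = G^[t+r] x
  have hyz : ∀ k, ⌊(G^[k] y)⁻¹⌋ = ⌊(G^[k] (G^[t+r] x))⁻¹⌋ := by
    intro k
    have e1 : G^[k] y = G^[k + t] x := (Function.iterate_add_apply G k t x).symm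
    have e2 : G^[k] (G^[t+r] x) = G^[(k + t) + r] x := by
      rw [← Function.iterate_add_apply]
      congr 1
      omega
    rw [e1, e2]
    exact (hper (k + t) (by omega)).symm
  have key : ∀ j : ℕ, |y - G^[t+r] x| ≤ (1/2)^j :=
    fun j => contract j y (G^[t+r] x) hy.1 hy.2 hz.1 hz.2 hyz
  have heq : G^[t+r] x = y := by
    by_contra hne
    have hpos : 0 < |y - G^[t+r] x| := abs_pos.mpr (sub_ne_zero.mpr (fun hh => hne hh.symm))
    obtain ⟨n, hn⟩ := exists_pow_lt_of_lt_one hpos (by norm_num : (1:ℝ)/2 < 1)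
    exact absurd (key n) (not_le.mpr hn)
  -- y's own continued fraction data
  set b : ℕ → ℤ := fun k => ⌊(G^[k] y)⁻¹⌋ with hbdef
  have hb : ∀ n, 1 ≤ b n := by
    intro n
    have := iter_props hy.1 hy.2 n
    exact (step this.1 this.2).2.2.1
  have hGr : G^[r] y = y := by
    rw [hydef, ← Function.iterate_add_apply]
    rw [show r + t = t + r from by omega]
    exact heq
  have hinvY := invariant hy.1 hy.2 r
  rw [hGr] at hinvY
  set A : ℤ := Q b r with hA
  set B : ℤ := S b r - P b r with hB
  set C : ℤ := -(R b r) with hC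
  have hquadY : (A:ℝ) * y^2 + B * y + C = 0 := by
    rw [hA, hB, hC]
    push_cast
    linear_combination hinvY
  -- x side at t
  set aq : ℕ → ℤ := fun k => ⌊(G^[k] x)⁻¹⌋ with haqdef
  have hinvX := invariant hirr hx t
  have hsub : y * ((Q aq t : ℝ) * x - P aq t) = (R aq t : ℝ) - S aq t * x := by
    linear_combination hinvX
  have hdetne : ((P aq t * S aq t - Q aq t * R aq t : ℤ) : ℝ) ≠ 0 := by
    have hds := det_sq aq t
    intro h0
    have : P aq t * S aq t - Q aq t * R aq t = 0 := by exact_mod_cast h0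
    rw [this] at hds
    norm_num at hds
  have hδ : ((P aq t : ℝ) - Q aq t * x) * ((Q aq t : ℝ) * y + S aq t)
      = ((P aq t * S aq t - Q aq t * R aq t : ℤ) : ℝ) := by
    push_cast
    linear_combination (-(Q aq t : ℝ)) * hinvX
  have hPQ : (Q aq t : ℝ) * x - P aq t ≠ 0 := by
    intro h0
    apply hdetne
    rw [← hδ]
    have : (P aq t : ℝ) - Q aq t * x = 0 := by linarith [h0.symm.le, h0.le]
    rw [this, zero_mul]
  have heq2 : (A:ℝ) * ((R aq t : ℝ) - S aq t * x)^2
      + B * (((R aq t : ℝ) - S aq t * x) * ((Q aq t : ℝ) * x - P aq t))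
      + C * ((Q aq t : ℝ) * x - P aq t)^2 = 0 := by
    linear_combination ((Q aq t : ℝ) * x - P aq t)^2 * hquadY
      - ((A:ℝ) * (((R aq t : ℝ) - S aq t * x) + y * ((Q aq t : ℝ) * x - P aq t))
          + (B:ℝ) * ((Q aq t : ℝ) * x - P aq t)) * hsub
  set c' : ℤ := A * (S aq t)^2 - B * (S aq t) * (Q aq t) + C * (Q aq t)^2 with hc'
  set d' : ℤ := -2*A*(R aq t)*(S aq t) + B*((R aq t)*(Q aq t) + (S aq t)*(P aq t))
      - 2*C*(Q aq t)*(P aq t) with hd'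
  set e' : ℤ := A*(R aq t)^2 - B*(R aq t)*(P aq t) + C*(P aq t)^2 with he'
  have hmain : (c' : ℝ) * x^2 + d' * x + e' = 0 := by
    rw [hc', hd', he']
    push_cast
    linear_combination heq2
  have hne : ¬(c' = 0 ∧ d' = 0 ∧ e' = 0) := by
    rintro ⟨h1, h2, h3⟩
    have hβ : C = 0 := by
      refine degen (S aq t) (R aq t) (-(Q aq t)) (-(P aq t)) B C A ?_ ?_ ?_ ?_
      · have hds := det_sq aq t
        linear_combination hds
      · linear_combination h1
      · linear_combination h3
      · linear_combination - h2
    have hRb := R_ge_one b hb r hr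
    omega
  exact ⟨c', d', e', lead hirr c' d' e' hmain hne, hmain⟩
lemma int_abs_le_sq (z : ℤ) : |z| ≤ z^2 := by
  rcases (abs_nonneg z).eq_or_lt with h | h
  · rw [← h]; positivity
  · have h1 : 1 ≤ |z| := h
    calc |z| = |z| * 1 := by ring
      _ ≤ |z| * |z| := by exact mul_le_mul_of_nonneg_left h1 (abs_nonneg z)
      _ = z^2 := by rw [← sq_abs]; ring

lemma periodic_of_quad {x : ℝ} (hirr : Irrational x) (hx : x ∈ Set.Ioo (0:ℝ) 1)
    (c d e : ℤ) (hc : c ≠ 0) (hquad : (c : ℝ) * x ^ 2 + d * x + e = 0) :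
    ∃ t r : ℕ, 1 ≤ r ∧ ∀ n ≥ t, ⌊(G^[n + r] x)⁻¹⌋ = ⌊(G^[n] x)⁻¹⌋ := by
  set aq : ℕ → ℤ := fun k => ⌊(G^[k] x)⁻¹⌋ with haqdef
  have ha : ∀ n, 1 ≤ aq n := by
    intro n
    have := iter_props hirr hx n
    exact (step this.1 this.2).2.2.1
  have hw : ∀ n, Irrational (G^[n] x) ∧ G^[n] x ∈ Set.Ioo (0:ℝ) 1 :=
    iter_props hirr hx
  have hinv := invariant hirr hx
  -- transformed quadratic coefficients
  set cc : ℕ → ℤ := fun n => c*(P aq n)^2 + d*(P aq n)*(Q aq n) + e*(Q aq n)^2 with hccdef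
  set dd : ℕ → ℤ := fun n => 2*c*(P aq n)*(R aq n)
      + d*((P aq n)*(S aq n) + (Q aq n)*(R aq n)) + 2*e*(Q aq n)*(S aq n) with hdddef
  set ee : ℕ → ℤ := fun n => c*(R aq n)^2 + d*(R aq n)*(S aq n) + e*(S aq n)^2 with heedef
  -- (A) each G^[n] x is a root of the transformed quadratic
  have hroot : ∀ n, (cc n : ℝ) * (G^[n] x)^2 + dd n * (G^[n] x) + ee n = 0 := by
    intro n
    have hi := hinv n
    simp only [hccdef, hdddef, heedef]
    push_cast
    linear_combination ((Q aq n:ℝ) * (G^[n] x) + S aq n)^2 * hquad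
      - ((c:ℝ)*((P aq n:ℝ)*(G^[n] x) + R aq n + x*((Q aq n:ℝ) * (G^[n] x) + S aq n))
          + (d:ℝ)*((Q aq n:ℝ) * (G^[n] x) + S aq n)) * hi
  -- (B) discriminant invariance
  have hdisc : ∀ n, (dd n)^2 - 4*(cc n)*(ee n) = d^2 - 4*c*e := by
    intro n
    simp only [hccdef, hdddef, heedef]
    linear_combination (d^2 - 4*c*e) * (det_sq aq n)
  -- basic positivity of D := Q w + S
  have hDfacts : ∀ n, (1:ℝ) ≤ (Q aq n:ℝ) * (G^[n] x) + S aq n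
      ∧ (Q aq n:ℝ) ≤ (Q aq n:ℝ) * (G^[n] x) + S aq n
      ∧ (S aq n:ℝ) * (G^[n] x) ≤ (Q aq n:ℝ) * (G^[n] x) + S aq n := by
    intro n
    obtain ⟨hP, hQ, hR, hS, hQS, hPR⟩ := pos aq ha n
    have hw0 := (hw n).2.1
    have hw1 := (hw n).2.2
    have hQ' : (0:ℝ) ≤ (Q aq n : ℝ) := by exact_mod_cast hQ
    have hS' : (1:ℝ) ≤ (S aq n : ℝ) := by exact_mod_cast hS
    have hQS' : (Q aq n:ℝ) ≤ (S aq n:ℝ) := by exact_mod_cast hQS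
    refine ⟨by nlinarith, by nlinarith, by nlinarith⟩
  -- delta identities
  have hdelta : ∀ n, ((P aq n : ℝ) - Q aq n * x) * ((Q aq n:ℝ) * (G^[n] x) + S aq n)
      = ((P aq n * S aq n - Q aq n * R aq n : ℤ) : ℝ) := by
    intro n
    push_cast
    linear_combination (-(Q aq n : ℝ)) * hinv n
  have hdelta' : ∀ n, ((R aq n : ℝ) - S aq n * x) * ((Q aq n:ℝ) * (G^[n] x) + S aq n)
      = -(G^[n] x) * ((P aq n * S aq n - Q aq n * R aq n : ℤ) : ℝ) := by
    intro n
    push_cast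
    linear_combination (-(S aq n : ℝ)) * hinv n
  have habsdet : ∀ n, |((P aq n * S aq n - Q aq n * R aq n : ℤ) : ℝ)| = 1 := by
    intro n
    rw [det]
    push_cast
    rw [abs_pow, abs_neg, abs_one, one_pow]
  -- |delta| * D = 1 etc.
  have hd1 : ∀ n, |(P aq n : ℝ) - Q aq n * x| * ((Q aq n:ℝ) * (G^[n] x) + S aq n) = 1 := by
    intro n
    have hD := (hDfacts n).1
    have := congrArg abs (hdelta n)
    rw [abs_mul, abs_of_pos (by linarith : (0:ℝ) < (Q aq n:ℝ) * (G^[n] x) + S aq n),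
      habsdet n] at this
    exact this
  have hd1' : ∀ n, |(R aq n : ℝ) - S aq n * x| * ((Q aq n:ℝ) * (G^[n] x) + S aq n)
      = G^[n] x := by
    intro n
    have hD := (hDfacts n).1
    have hw0 := (hw n).2.1
    have := congrArg abs (hdelta' n)
    rw [abs_mul, abs_of_pos (by linarith : (0:ℝ) < (Q aq n:ℝ) * (G^[n] x) + S aq n),
      abs_mul, habsdet n, abs_neg, abs_of_pos hw0, mul_one] at this
    exact this
  -- smallness bounds
  have hsmall : ∀ n, |(P aq n : ℝ) - Q aq n * x| ≤ 1 ∧ |(Q aq n:ℝ)*((P aq n : ℝ) - Q aq n * x)| ≤ 1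
      ∧ |(R aq n : ℝ) - S aq n * x| ≤ 1 ∧ |(S aq n:ℝ)*((R aq n : ℝ) - S aq n * x)| ≤ 1 := by
    intro n
    obtain ⟨hD1, hDQ, hDS⟩ := hDfacts n
    have h1 := hd1 n
    have h1' := hd1' n
    have hw1 := (hw n).2.2
    have hw0 := (hw n).2.1
    have hQ0 : (0:ℝ) ≤ (Q aq n:ℝ) := by exact_mod_cast (pos aq ha n).2.1
    have hS0 : (0:ℝ) ≤ (S aq n:ℝ) := by
      have := (pos aq ha n).2.2.2.1; exact_mod_cast (by omega : (0:ℤ) ≤ S aq n)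
    have a1 := abs_nonneg ((P aq n : ℝ) - Q aq n * x)
    have a2 := abs_nonneg ((R aq n : ℝ) - S aq n * x)
    refine ⟨by nlinarith, ?_, by nlinarith, ?_⟩
    · rw [abs_mul, abs_of_nonneg hQ0]
      nlinarith
    · rw [abs_mul, abs_of_nonneg hS0]
      nlinarith
  -- identities for cc and ee
  have hccid : ∀ n, (cc n : ℝ) = ((Q aq n:ℝ)*((P aq n : ℝ) - Q aq n * x))*(2*c*x + d)
      + c*((P aq n : ℝ) - Q aq n * x)^2 := by
    intro n
    simp only [hccdef]
    push_cast
    linear_combination (Q aq n:ℝ)^2 * hquad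
  have heeid : ∀ n, (ee n : ℝ) = ((S aq n:ℝ)*((R aq n : ℝ) - S aq n * x))*(2*c*x + d)
      + c*((R aq n : ℝ) - S aq n * x)^2 := by
    intro n
    simp only [heedef]
    push_cast
    linear_combination (S aq n:ℝ)^2 * hquad
  -- integer bound M for |cc|, |ee|
  set Br : ℝ := |2*(c:ℝ)*x + d| + |(c:ℝ)| with hBrdef
  set Mz : ℤ := max 1 ⌈Br⌉ with hMzdef
  have hMz1 : 1 ≤ Mz := le_max_left _ _
  have hbound : ∀ n, |cc n| ≤ Mz ∧ |ee n| ≤ Mz := by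
    intro n
    obtain ⟨s1, s2, s3, s4⟩ := hsmall n
    have hBrM : Br ≤ (Mz:ℝ) := by
      have : ((⌈Br⌉:ℤ):ℝ) ≤ (Mz:ℝ) := by exact_mod_cast le_max_right 1 ⌈Br⌉
      linarith [Int.le_ceil Br]
    constructor
    · have t1 : |((Q aq n:ℝ) * ((P aq n : ℝ) - Q aq n * x)) * (2*(c:ℝ)*x + d)|
          ≤ |2*(c:ℝ)*x + d| := by
        rw [abs_mul]
        nlinarith [abs_nonneg (2*(c:ℝ)*x + d), s2,
          abs_nonneg ((Q aq n:ℝ) * ((P aq n : ℝ) - Q aq n * x))]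
      have t2 : |(c:ℝ) * ((P aq n : ℝ) - Q aq n * x)^2| ≤ |(c:ℝ)| := by
        rw [abs_mul, abs_pow]
        have hsq : |(P aq n : ℝ) - Q aq n * x|^2 ≤ 1 := by
          nlinarith [s1, abs_nonneg ((P aq n : ℝ) - Q aq n * x)]
        nlinarith [abs_nonneg ((c:ℝ)), hsq]
      have hr : |(cc n : ℝ)| ≤ Br := by
        rw [hccid n, hBrdef]
        exact (abs_add_le _ _).trans (add_le_add t1 t2)
      have hfin : |(cc n : ℝ)| ≤ (Mz:ℝ) := hr.trans hBrM
      exact_mod_cast hfin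
    · have t1 : |((S aq n:ℝ) * ((R aq n : ℝ) - S aq n * x)) * (2*(c:ℝ)*x + d)|
          ≤ |2*(c:ℝ)*x + d| := by
        rw [abs_mul]
        nlinarith [abs_nonneg (2*(c:ℝ)*x + d), s4,
          abs_nonneg ((S aq n:ℝ) * ((R aq n : ℝ) - S aq n * x))]
      have t2 : |(c:ℝ) * ((R aq n : ℝ) - S aq n * x)^2| ≤ |(c:ℝ)| := by
        rw [abs_mul, abs_pow]
        have hsq : |(R aq n : ℝ) - S aq n * x|^2 ≤ 1 := by
          nlinarith [s3, abs_nonneg ((R aq n : ℝ) - S aq n * x)]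
        nlinarith [abs_nonneg ((c:ℝ)), hsq]
      have hr : |(ee n : ℝ)| ≤ Br := by
        rw [heeid n, hBrdef]
        exact (abs_add_le _ _).trans (add_le_add t1 t2)
      have hfin : |(ee n : ℝ)| ≤ (Mz:ℝ) := hr.trans hBrM
      exact_mod_cast hfin
  set K : ℤ := |d^2 - 4*c*e| + 4*Mz^2 + Mz with hKdef
  have hboundK : ∀ n, |cc n| ≤ K ∧ |dd n| ≤ K ∧ |ee n| ≤ K := by
    intro n
    obtain ⟨b1, b2⟩ := hbound n
    have hdd2 : (dd n)^2 ≤ |d^2 - 4*c*e| + 4*Mz^2 := by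
      have h := hdisc n
      have : (dd n)^2 = (d^2 - 4*c*e) + 4*(cc n)*(ee n) := by linarith
      rw [this]
      have h4 : (cc n)*(ee n) ≤ Mz^2 := by
        calc (cc n)*(ee n) ≤ |(cc n)*(ee n)| := le_abs_self _
          _ = |cc n| * |ee n| := abs_mul _ _
          _ ≤ Mz * Mz := mul_le_mul b1 b2 (abs_nonneg _) (by omega)
          _ = Mz^2 := by ring
      have h5 : d^2 - 4*c*e ≤ |d^2 - 4*c*e| := le_abs_self _
      linarith
    have habs : |dd n| ≤ (dd n)^2 := int_abs_le_sq (dd n)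
    have hM0 : 0 ≤ Mz := by omega
    have hMsq : 0 ≤ Mz^2 := sq_nonneg _
    have habsd : 0 ≤ |d^2-4*c*e| := abs_nonneg _
    exact ⟨by omega, by omega, by omega⟩
  -- cc n ≠ 0 for n ≥ 1
  have hccne : ∀ n, 1 ≤ n → cc n ≠ 0 := by
    intro n hn h0
    have hQ1 : 1 ≤ Q aq n := Q_ge_one aq ha n hn
    have hδne : (P aq n : ℝ) - Q aq n * x ≠ 0 := by
      intro hz
      have := hd1 n
      rw [hz, abs_zero, zero_mul] at this
      norm_num at this
    have hid := hccid n
    rw [h0] at hid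
    have hfac : ((P aq n : ℝ) - Q aq n * x) *
        ((Q aq n:ℝ)*(2*c*x + d) + c*((P aq n : ℝ) - Q aq n * x)) = 0 := by
      push_cast at hid ⊢
      linear_combination -hid
    rcases mul_eq_zero.mp hfac with h | h
    · exact hδne h
    · -- (c*Q) x = -(d*Q + c*P)
      refine not_lin hirr (-(d*(Q aq n) + c*(P aq n))) (c*(Q aq n)) ?_ ?_
      · intro hz
        rcases mul_eq_zero.mp hz with h' | h'
        · exact hc h'
        · omega
      · push_cast
        linarith
  -- pigeonhole
  set T : Finset (ℤ×ℤ×ℤ) := Finset.Icc (-K) K ×ˢ Finset.Icc (-K) K ×ˢ Finset.Icc (-K) K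
    with hTdef
  have hmem : ∀ n : ℕ, ((cc (n+1), dd (n+1), ee (n+1)) : ℤ×ℤ×ℤ) ∈ T := by
    intro n
    obtain ⟨b1, b2, b3⟩ := hboundK (n+1)
    rw [abs_le] at b1 b2 b3
    simp only [hTdef, Finset.mem_product, Finset.mem_Icc]
    exact ⟨⟨b1.1, b1.2⟩, ⟨b2.1, b2.2⟩, ⟨b3.1, b3.2⟩⟩
  have hpig : ∃ v ∈ T, {n : ℕ | (cc (n+1), dd (n+1), ee (n+1)) = v}.Infinite := by
    by_contra hcon
    push_neg at hcon
    have hfin : (⋃ v ∈ T, {n : ℕ | (cc (n+1), dd (n+1), ee (n+1)) = v}).Finite :=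
      Set.Finite.biUnion T.finite_toSet (fun v hv => hcon v hv)
    have hcover : (Set.univ : Set ℕ) ⊆
        ⋃ v ∈ T, {n : ℕ | (cc (n+1), dd (n+1), ee (n+1)) = v} := by
      intro n _
      exact Set.mem_biUnion (hmem n) rfl
    exact Set.infinite_univ (hfin.subset hcover)
  obtain ⟨⟨c₀, d₀, e₀⟩, hvT, hvinf0⟩ := hpig
  have hvinf : {n : ℕ | cc (n+1) = c₀ ∧ dd (n+1) = d₀ ∧ ee (n+1) = e₀}.Infinite := by
    refine hvinf0.mono ?_
    intro n hn
    simp only [Set.mem_setOf_eq, Prod.mk.injEq] at hn ⊢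
    exact ⟨hn.1, hn.2.1, hn.2.2⟩
  obtain ⟨n₁, h1m, -⟩ := hvinf.exists_gt 0
  obtain ⟨n₂, h2m, h12⟩ := hvinf.exists_gt n₁
  obtain ⟨n₃, h3m, h23⟩ := hvinf.exists_gt n₂
  simp only [Set.mem_setOf_eq] at h1m h2m h3m
  have final : ∀ i j : ℕ, i < j → G^[i] x = G^[j] x →
      ∃ t r : ℕ, 1 ≤ r ∧ ∀ n ≥ t, ⌊(G^[n + r] x)⁻¹⌋ = ⌊(G^[n] x)⁻¹⌋ := by
    intro i j hij hwij
    refine ⟨i, j - i, by omega, ?_⟩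
    intro n hn
    have hiter : G^[n + (j-i)] x = G^[n] x := by
      rw [show n + (j-i) = (n-i) + j from by omega, Function.iterate_add_apply, ← hwij,
        ← Function.iterate_add_apply, show (n-i) + i = n from by omega]
    rw [hiter]
  have hc₀ : c₀ ≠ 0 := by
    rw [← h1m.1]
    exact hccne (n₁+1) (by omega)
  have hc₀R : (c₀ : ℝ) ≠ 0 := Int.cast_ne_zero.mpr hc₀
  have hru : (c₀ : ℝ) * (G^[n₁+1] x)^2 + d₀ * (G^[n₁+1] x) + e₀ = 0 := by
    rw [← h1m.1, ← h1m.2.1, ← h1m.2.2]; exact hroot (n₁+1)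
  have hrv : (c₀ : ℝ) * (G^[n₂+1] x)^2 + d₀ * (G^[n₂+1] x) + e₀ = 0 := by
    rw [← h2m.1, ← h2m.2.1, ← h2m.2.2]; exact hroot (n₂+1)
  have hrw : (c₀ : ℝ) * (G^[n₃+1] x)^2 + d₀ * (G^[n₃+1] x) + e₀ = 0 := by
    rw [← h3m.1, ← h3m.2.1, ← h3m.2.2]; exact hroot (n₃+1)
  by_cases h12e : G^[n₁+1] x = G^[n₂+1] x
  · exact final (n₁+1) (n₂+1) (by omega) h12e
  by_cases h13e : G^[n₁+1] x = G^[n₃+1] x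
  · exact final (n₁+1) (n₃+1) (by omega) h13e
  have g1 : (c₀:ℝ) * (G^[n₁+1] x + G^[n₂+1] x) + d₀ = 0 := by
    have hz : (G^[n₁+1] x - G^[n₂+1] x) * ((c₀:ℝ) * (G^[n₁+1] x + G^[n₂+1] x) + d₀) = 0 := by
      linear_combination hru - hrv
    rcases mul_eq_zero.mp hz with h | h
    · exact absurd (sub_eq_zero.mp h) h12e
    · exact h
  have g2 : (c₀:ℝ) * (G^[n₁+1] x + G^[n₃+1] x) + d₀ = 0 := by
    have hz : (G^[n₁+1] x - G^[n₃+1] x) * ((c₀:ℝ) * (G^[n₁+1] x + G^[n₃+1] x) + d₀) = 0 := by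
      linear_combination hru - hrw
    rcases mul_eq_zero.mp hz with h | h
    · exact absurd (sub_eq_zero.mp h) h13e
    · exact h
  have h23e : G^[n₂+1] x = G^[n₃+1] x := by
    have hz : (c₀:ℝ) * (G^[n₂+1] x - G^[n₃+1] x) = 0 := by linear_combination g1 - g2
    rcases mul_eq_zero.mp hz with h | h
    · exact absurd h hc₀R
    · exact sub_eq_zero.mp h
  exact final (n₂+1) (n₃+1) (by omega) h23e
end LagrangeAux

/-- Lagrange's theorem: an irrational in (0,1) has eventually periodic partial
quotients iff it is a quadratic irrational. Here `G = fun y => Int.fract y⁻¹`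
is the Gauss map and the n-th partial quotient (n ≥ 1) is `⌊(G^[n-1] x)⁻¹⌋`. -/
theorem lagrange_theorem (x : ℝ) (hx : x ∈ Set.Ioo (0 : ℝ) 1)
    (hirr : Irrational x) :
    (∃ t : ℕ, ∃ r : ℕ, 1 ≤ r ∧ ∀ n ≥ t,
        ⌊((fun y : ℝ => Int.fract y⁻¹)^[n + r] x)⁻¹⌋
          = ⌊((fun y : ℝ => Int.fract y⁻¹)^[n] x)⁻¹⌋) ↔
      ∃ c d e : ℤ, c ≠ 0 ∧ (c : ℝ) * x ^ 2 + d * x + e = 0 := by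
  constructor
  · rintro ⟨t, r, hr, hper⟩
    exact LagrangeAux.quad_of_periodic hirr hx t r hr hper
  · rintro ⟨c, d, e, hc, hq⟩
    obtain ⟨t, r, hr, hper⟩ := LagrangeAux.periodic_of_quad hirr hx c d e hc hq
    exact ⟨t, r, hr, hper⟩
end
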